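/- arXiv:2510.00441 — 3 statements merged into one kernel-verified Lean document; each statement's English description precedes it below -/
import Mathlib

section
/- For exchangeable, almost surely distinct random variables g_1,...,g_{N+1}, the rank of g_{N+1} among all N+1 variables is uniformly distributed on {1,...,N+1}. -/
open MeasureTheory Finset
open scoped ENNReal

namespace RankAux

variable {N : ℕ}

noncomputable def rk (x : Fin (N + 1) → ℝ) (j : Fin (N + 1)) : ℕ :=
  (Finset.univ.filter (fun i => x i ≤ x j)).card

lemma rk_lt {x : Fin (N + 1) → ℝ} {j j' : Fin (N + 1)} (h : x j < x j') :
    rk x j < rk x j' := by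
  apply Finset.card_lt_card
  constructor
  · intro i hi
    simp only [Finset.mem_filter, Finset.mem_univ, true_and] at hi ⊢
    exact hi.trans h.le
  · intro hsub
    have hj' : j' ∈ Finset.univ.filter (fun i => x i ≤ x j') := by simp
    have := hsub hj'
    simp only [Finset.mem_filter, Finset.mem_univ, true_and] at this
    exact absurd (lt_of_le_of_lt this h) (lt_irrefl _)

lemma rk_injective {x : Fin (N + 1) → ℝ} (hx : Function.Injective x) :
    Function.Injective (rk x) := by
  intro j j' h
  by_contra hne
  have hxne : x j ≠ x j' := fun he => hne (hx he)
  rcases hxne.lt_or_gt with h1 | h1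
  · exact absurd h (rk_lt h1).ne
  · exact absurd h.symm (rk_lt h1).ne

lemma rk_mem_Icc (x : Fin (N + 1) → ℝ) (j : Fin (N + 1)) :
    rk x j ∈ Finset.Icc 1 (N + 1) := by
  simp only [Finset.mem_Icc]
  constructor
  · have : j ∈ Finset.univ.filter (fun i => x i ≤ x j) := by simp
    exact Finset.card_pos.mpr ⟨j, this⟩
  · calc rk x j ≤ (Finset.univ : Finset (Fin (N + 1))).card := Finset.card_filter_le _ _
    _ = N + 1 := by simp

lemma exists_rk_eq {x : Fin (N + 1) → ℝ} (hx : Function.Injective x)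
    {k : ℕ} (hk : k ∈ Finset.Icc 1 (N + 1)) : ∃ j, rk x j = k := by
  have himg : Finset.univ.image (rk x) = Finset.Icc 1 (N + 1) := by
    apply Finset.eq_of_subset_of_card_le
    · intro m hm
      simp only [Finset.mem_image] at hm
      obtain ⟨j, _, rfl⟩ := hm
      exact rk_mem_Icc x j
    · rw [Finset.card_image_of_injective _ (rk_injective hx)]
      simp
  have : k ∈ Finset.univ.image (rk x) := himg ▸ hk
  simpa using this

lemma rk_comp (π : Equiv.Perm (Fin (N + 1))) (x : Fin (N + 1) → ℝ) (j : Fin (N + 1)) :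
    rk (fun i => x (π i)) j = rk x (π j) := by
  unfold rk
  apply Finset.card_nbij π
  · intro a ha
    simp only [Finset.mem_coe, Finset.mem_filter, Finset.mem_univ, true_and] at ha ⊢
    exact ha
  · intro a ha b hb hab
    exact π.injective hab
  · intro b hb
    refine ⟨π.symm b, ?_, by simp⟩
    simp only [Finset.coe_filter, Set.mem_setOf_eq, Finset.mem_univ, true_and,
      Equiv.apply_symm_apply] at hb ⊢
    exact hb

lemma measurable_rk (j : Fin (N + 1)) : Measurable (fun x : Fin (N + 1) → ℝ => rk x j) := by
  have : (fun x : Fin (N + 1) → ℝ => rk x j) =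
      fun x => ∑ i : Fin (N + 1), if x i ≤ x j then 1 else 0 := by
    funext x; exact Finset.card_filter _ _
  rw [this]
  exact Finset.measurable_sum _ fun i _ =>
    Measurable.ite (measurableSet_le (measurable_pi_apply i) (measurable_pi_apply j))
      measurable_const measurable_const

end RankAux

open RankAux in
/-- for exchangeable, almost surely distinct real random variables
`g 0, ..., g N`, the rank of the last one among all `N + 1` of them (the number of
indices `i` with `g i ≤ g (last)`) is uniform on `{1, ..., N + 1}`. -/
theorem rank_of_last_uniform
    {Ω : Type*} [MeasurableSpace Ω] (μ : Measure Ω) [IsProbabilityMeasure μ]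
    (N : ℕ) (g : Fin (N + 1) → Ω → ℝ) (hmeas : ∀ i, Measurable (g i))
    (hexch : ∀ π : Equiv.Perm (Fin (N + 1)),
      Measure.map (fun ω i => g (π i) ω) μ = Measure.map (fun ω i => g i ω) μ)
    (hdist : ∀ᵐ ω ∂μ, Function.Injective fun i => g i ω) :
    ∀ k ∈ Finset.Icc 1 (N + 1),
      μ {ω | (Finset.univ.filter
          (fun i : Fin (N + 1) => g i ω ≤ g (Fin.last N) ω)).card = k} =
        1 / (N + 1) := by
  intro k hk
  classical
  have hGmeas : Measurable (fun ω i => g i ω : Ω → Fin (N + 1) → ℝ) :=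
    measurable_pi_lambda _ hmeas
  set A : Fin (N + 1) → Set Ω := fun j => {ω | rk (fun i => g i ω) j = k} with hA
  have hAmeas : ∀ j, MeasurableSet (A j) := fun j =>
    hGmeas ((measurable_rk j) (measurableSet_singleton k))
  -- all events A j have the same measure, by exchangeability
  have heq : ∀ j, μ (A j) = μ (A (Fin.last N)) := by
    intro j
    have hS : MeasurableSet {x : Fin (N + 1) → ℝ | rk x (Fin.last N) = k} :=
      (measurable_rk (Fin.last N)) (measurableSet_singleton k)
    set π := Equiv.swap j (Fin.last N) with hπ
    have hmeas2 : Measurable (fun ω i => g (π i) ω : Ω → Fin (N + 1) → ℝ) :=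
      measurable_pi_lambda _ fun i => hmeas _
    have hmaps := congrArg (fun m : Measure (Fin (N + 1) → ℝ) =>
      m {x | rk x (Fin.last N) = k}) (hexch π)
    simp only [Measure.map_apply hmeas2 hS, Measure.map_apply hGmeas hS] at hmaps
    have hL : (fun ω i => g (π i) ω) ⁻¹' {x | rk x (Fin.last N) = k} = A j := by
      ext ω
      simp only [Set.mem_preimage, Set.mem_setOf_eq, hA]
      rw [show (fun i => g (π i) ω) = (fun i => (fun i' => g i' ω) (π i)) from rfl,
        rk_comp π (fun i' => g i' ω) (Fin.last N), hπ, Equiv.swap_apply_right]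
    have hR : (fun ω i => g i ω) ⁻¹' {x | rk x (Fin.last N) = k} = A (Fin.last N) := rfl
    rw [hL, hR] at hmaps
    exact hmaps
  -- a measurable conull set on which (g · ω) is injective
  obtain ⟨t, hts, htm, ht0⟩ :=
    exists_measurable_superset_of_null (ae_iff.mp hdist)
  have htc : μ tᶜ = 1 := by
    rw [measure_compl htm (measure_ne_top μ t), ht0, measure_univ, tsub_zero]
  have hinj : ∀ ω ∈ tᶜ, Function.Injective fun i => g i ω := by
    intro ω hω
    by_contra h
    exact hω (hts h)
  -- the sets A j ∩ tᶜ partition tᶜ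
  have hdisj : Pairwise (Function.onFun Disjoint fun j => A j ∩ tᶜ) := by
    intro j j' hjj'
    rw [Function.onFun, Set.disjoint_left]
    rintro ω ⟨hω1, hω2⟩ ⟨hω1', _⟩
    exact hjj' (rk_injective (hinj ω hω2) (hω1.trans hω1'.symm))
  have hcover : (⋃ j, A j ∩ tᶜ) = tᶜ := by
    ext ω
    simp only [Set.mem_iUnion, Set.mem_inter_iff]
    constructor
    · rintro ⟨j, _, h⟩; exact h
    · intro hω
      obtain ⟨j, hj⟩ := exists_rk_eq (hinj ω hω) hk
      exact ⟨j, hj, hω⟩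
  have hsum : ∑ j : Fin (N + 1), μ (A j ∩ tᶜ) = 1 := by
    rw [← tsum_fintype (L := SummationFilter.unconditional _), ← measure_iUnion hdisj fun j => (hAmeas j).inter htm.compl,
      hcover, htc]
  have hAic : ∀ j, μ (A j ∩ tᶜ) = μ (A j) := by
    intro j
    exact measure_inter_conull (by rwa [compl_compl])
  have hfin : (N + 1 : ℝ≥0∞) * μ (A (Fin.last N)) = 1 := by
    calc (N + 1 : ℝ≥0∞) * μ (A (Fin.last N))
        = ∑ _j : Fin (N + 1), μ (A (Fin.last N)) := by
          rw [Finset.sum_const, Finset.card_univ, Fintype.card_fin, nsmul_eq_mul]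
          push_cast; ring
      _ = ∑ j : Fin (N + 1), μ (A j ∩ tᶜ) := by
          refine Finset.sum_congr rfl fun j _ => ?_
          rw [hAic j, heq j]
      _ = 1 := hsum
  have : μ (A (Fin.last N)) = 1 / (N + 1 : ℝ≥0∞) := by
    rw [ENNReal.eq_div_iff (by simp) (by simp)]
    exact hfin
  exact this
end

section
/- PICNN output convexity: Define σ_0 = 0 ∈ ℝ^d and σ_{l+1} = ReLU(W_l σ_l + V_l M + b_l) for l = 0,...,L-1, where each W_l (for l ≥ 1) has nonnegative entries, and define g(M) = W_L σ_L + V_L M + b_L with W_L having nonnegative entries and g scalar-valued. Then g : ℝ^m → ℝ is convex in M. -/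
/-- Hidden activations of a PICNN: `σ_0 = 0`, `σ_{l+1} = ReLU(W_l σ_l + V_l M + b_l)`. -/
noncomputable def picnnSigma {d m : ℕ} (W : ℕ → Matrix (Fin d) (Fin d) ℝ)
    (V : ℕ → Matrix (Fin d) (Fin m) ℝ) (b : ℕ → Fin d → ℝ) (M : Fin m → ℝ) :
    ℕ → Fin d → ℝ
  | 0 => 0
  | l + 1 => fun i =>
      max ((W l).mulVec (picnnSigma W V b M l) i + (V l).mulVec M i + b l i) 0

private lemma convexOn_sum' {n : ℕ} {ι : Type*} (t : Finset ι)
    (f : ι → (Fin n → ℝ) → ℝ) (h : ∀ i ∈ t, ConvexOn ℝ Set.univ (f i)) :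
    ConvexOn ℝ Set.univ (fun x => ∑ i ∈ t, f i x) := by
  classical
  induction t using Finset.induction_on with
  | empty => simpa using convexOn_const 0 convex_univ
  | @insert a s hnot ih =>
    simp only [Finset.sum_insert hnot]
    exact (h a (Finset.mem_insert_self a s)).add
      (ih fun i hi => h i (Finset.mem_insert_of_mem hi))

private lemma convexOn_affine {n : ℕ} (c : Fin n → ℝ) (b : ℝ) :
    ConvexOn ℝ Set.univ (fun x : Fin n → ℝ => (∑ j, c j * x j) + b) := by
  have hl : ConvexOn ℝ Set.univ (fun x : Fin n → ℝ => ∑ j, c j * x j) := by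
    exact LinearMap.convexOn
      { toFun := fun x : Fin n → ℝ => ∑ j, c j * x j
        map_add' := by intro x y; simp [mul_add, Finset.sum_add_distrib]
        map_smul' := by
          intro r x
          simp [Finset.mul_sum, mul_comm, mul_left_comm] } convex_univ
  simpa [Pi.add_def] using hl.add (convexOn_const b convex_univ)

private lemma picnnSigma_convex {d m : ℕ} (W : ℕ → Matrix (Fin d) (Fin d) ℝ)
    (V : ℕ → Matrix (Fin d) (Fin m) ℝ) (b : ℕ → Fin d → ℝ)
    (hW : ∀ l, 1 ≤ l → ∀ i j, 0 ≤ W l i j) :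
    ∀ l i, ConvexOn ℝ Set.univ (fun M => picnnSigma W V b M l i) := by
  intro l
  induction l with
  | zero => intro i; simpa [picnnSigma] using convexOn_const (0:ℝ) convex_univ
  | succ l ih =>
    intro i
    have hinner : ConvexOn ℝ Set.univ (fun M : Fin m → ℝ =>
        (W l).mulVec (picnnSigma W V b M l) i + (V l).mulVec M i + b l i) := by
      have h1 : ConvexOn ℝ Set.univ (fun M : Fin m → ℝ =>
          ∑ j, W l i j * picnnSigma W V b M l j) := by
        apply convexOn_sum'
        intro j _
        rcases Nat.eq_zero_or_pos l with hl | hl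
        · subst hl
          simpa [picnnSigma] using convexOn_const (0:ℝ) convex_univ
        · exact (ih j).smul (hW l hl i j)
      have h2 : ConvexOn ℝ Set.univ (fun M : Fin m → ℝ =>
          (∑ j, V l i j * M j) + b l i) := convexOn_affine _ _
      have := h1.add h2
      convert this using 2 with M
      · rfl
      simp [Matrix.mulVec, dotProduct, add_assoc]
    have := hinner.sup (convexOn_const (0:ℝ) convex_univ)
    simpa [picnnSigma, Pi.sup_def, max_comm] using this

/-- the scalar PICNN output `g(M) = W_L σ_L + V_L M + b_L` is convex in `M`
when all the hidden and output weights `W_l` (`l ≥ 1`) are entrywise nonnegative. -/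
theorem picnn_output_convex (d m L : ℕ)
    (W : ℕ → Matrix (Fin d) (Fin d) ℝ) (V : ℕ → Matrix (Fin d) (Fin m) ℝ)
    (b : ℕ → Fin d → ℝ)
    (hW : ∀ l, 1 ≤ l → ∀ i j, 0 ≤ W l i j)
    (wL : Fin d → ℝ) (hwL : ∀ i, 0 ≤ wL i) (vL : Fin m → ℝ) (bL : ℝ) :
    ConvexOn ℝ Set.univ fun M : Fin m → ℝ =>
      (∑ i, wL i * picnnSigma W V b M L i) + (∑ j, vL j * M j) + bL := by
  have h1 : ConvexOn ℝ Set.univ (fun M : Fin m → ℝ =>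
      ∑ i, wL i * picnnSigma W V b M L i) :=
    convexOn_sum' _ _ fun i _ => (picnnSigma_convex W V b hW L i).smul (hwL i)
  have h2 := convexOn_affine vL bL
  simpa [add_assoc, Pi.add_def] using h1.add h2
end

section
/- If each W_l has nonnegative entries (l = 1,...,L), then the relaxation of the PICNN sublevel set is exact: for any (M, s_1,...,s_L) satisfying σ_l-relaxed constraints s_l ≥ 0 and s_{l+1} ≥ W_l s_l + V_l M + b_l and W_L s_L + V_L M + b_L ≤ q, the true PICNN activations σ_l (computed with equality and ReLU) satisfy σ_l ≤ s_l componentwise for all l, and hence g(M) = W_L σ_L + V_L M + b_L ≤ q. -/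
/-- with nonnegative weights the ReLU relaxation is exact: any point
`(M, s_1, ..., s_L)` of the relaxed polyhedron dominates the true activations
componentwise, hence `g(M) ≤ q`, i.e. the relaxed polyhedron projects exactly onto
the sublevel set. -/
theorem picnn_relaxation_exact (d m L : ℕ)
    (W : ℕ → Matrix (Fin d) (Fin d) ℝ) (V : ℕ → Matrix (Fin d) (Fin m) ℝ)
    (b : ℕ → Fin d → ℝ)
    (hW : ∀ l, 1 ≤ l → l < L → ∀ i j, 0 ≤ W l i j)
    (wL : Fin d → ℝ) (hwL : ∀ i, 0 ≤ wL i) (vL : Fin m → ℝ) (bL : ℝ) (q : ℝ)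
    (M : Fin m → ℝ) (s : ℕ → Fin d → ℝ) (hs0 : s 0 = 0)
    (hpos : ∀ l, 1 ≤ l → l ≤ L → 0 ≤ s l)
    (hrelax : ∀ l < L, ∀ i, (W l).mulVec (s l) i + (V l).mulVec M i + b l i ≤ s (l + 1) i)
    (hq : (∑ i, wL i * s L i) + (∑ j, vL j * M j) + bL ≤ q) :
    (∀ l ≤ L, picnnSigma W V b M l ≤ s l) ∧
    (∑ i, wL i * picnnSigma W V b M L i) + (∑ j, vL j * M j) + bL ≤ q := by
  have key : ∀ l ≤ L, picnnSigma W V b M l ≤ s l := by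
    intro l
    induction l with
    | zero => intro _; simp [picnnSigma, hs0]
    | succ l ih =>
      intro hlL
      have hlt : l < L := Nat.lt_of_succ_le hlL
      have hle := ih (Nat.le_of_lt hlt)
      intro i
      have hmul : (W l).mulVec (picnnSigma W V b M l) i ≤ (W l).mulVec (s l) i := by
        rcases Nat.eq_zero_or_pos l with h0 | h1
        · subst h0
          simp [picnnSigma, hs0]
        · unfold Matrix.mulVec dotProduct
          apply Finset.sum_le_sum
          intro j _
          exact mul_le_mul_of_nonneg_left (hle j) (hW l h1 hlt i j)
      have hnn : (0 : Fin d → ℝ) ≤ s (l + 1) :=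
        hpos (l + 1) (Nat.succ_le_succ (Nat.zero_le l)) hlL
      have : picnnSigma W V b M (l + 1) i =
          max ((W l).mulVec (picnnSigma W V b M l) i + (V l).mulVec M i + b l i) 0 := rfl
      rw [this]
      apply max_le _ (hnn i)
      calc (W l).mulVec (picnnSigma W V b M l) i + (V l).mulVec M i + b l i
          ≤ (W l).mulVec (s l) i + (V l).mulVec M i + b l i := by linarith
        _ ≤ s (l + 1) i := hrelax l hlt i
  refine ⟨key, ?_⟩
  refine le_trans ?_ hq
  refine add_le_add_left (add_le_add_left ?_ _) _
  exact Finset.sum_le_sum fun i _ => mul_le_mul_of_nonneg_left (key L le_rfl i) (hwL i)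
end
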